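/- (Stability of supersolutions under monotone increasing limits.) For each n ≥ 1 and each i ∈ 𝓘 let v^{i,n} : ℝ^k → ℝ be continuous, with v^{i,n} ≤ v^{i,n+1} pointwise and with a uniform polynomial growth bound |v^{i,n}(x)| ≤ C(1 + |x|^γ) independent of n. Assume that for each n ≥ 1, the m-tuple (v^{1,n},…,v^{m,n}) is a viscosity supersolution of the decoupled system (S_n): for each i, min{ v^{i,n}(x) − max_{j≠i}( v^{j,n}(x) − g_ij(x) ), r v^{i,n}(x) − ⟨b(x), D_x v^{i,n}(x)⟩ − ½Tr[(σσᵀ)(x) D²_x v^{i,n}(x)] − f_i(x, v^{1,n−1}(x),…,v^{i−1,n−1}(x), v^{i,n}(x), v^{i+1,n−1}(x),…,v^{m,n−1}(x), σ(x)ᵀ D_x v^{i,n}(x)) } = 0. Define v^i(x) = lim_{n→∞} v^{i,n}(x) (the pointwise increasing limit, which is lower semicontinuous). Then (v^1,…,v^m) is a viscosity supersolution of the system (S). -/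

import Mathlib

open Filter Matrix

noncomputable section

abbrev Vec (n : ℕ) := Fin n → ℝ

/-- Euclidean norm on `Fin n → ℝ`. -/
def eucNorm {n : ℕ} (v : Vec n) : ℝ := Real.sqrt (∑ i, v i ^ 2)

/-- Euclidean inner product. -/
def dotp {n : ℕ} (u v : Vec n) : ℝ := ∑ i, u i * v i

/-- Quadratic form `⟨X v, v⟩`. -/
def quadForm {n : ℕ} (X : Matrix (Fin n) (Fin n) ℝ) (v : Vec n) : ℝ :=
  ∑ i, ∑ j, X i j * v i * v j

/-- Squared Frobenius norm. -/
def frobSq {n p : ℕ} (A : Matrix (Fin n) (Fin p) ℝ) : ℝ := ∑ i, ∑ j, A i j ^ 2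

/-- `(q, X)` belongs to the second-order subjet `J^{2,-} φ (x)`. -/
def InSubjet {n : ℕ} (φ : Vec n → ℝ) (x q : Vec n) (X : Matrix (Fin n) (Fin n) ℝ) : Prop :=
  X.IsSymm ∧ ∀ ε > (0:ℝ), ∀ᶠ y in nhds x,
    φ x + dotp q (y - x) + (1/2) * quadForm X (y - x) - ε * eucNorm (y - x) ^ 2 ≤ φ y

/-- `(q, X)` belongs to the second-order superjet `J^{2,+} φ (x)`. -/
def InSuperjet {n : ℕ} (φ : Vec n → ℝ) (x q : Vec n) (X : Matrix (Fin n) (Fin n) ℝ) : Prop :=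
  X.IsSymm ∧ ∀ ε > (0:ℝ), ∀ᶠ y in nhds x,
    φ y ≤ φ x + dotp q (y - x) + (1/2) * quadForm X (y - x) + ε * eucNorm (y - x) ^ 2

/-- Polynomial growth. -/
def PolyGrowth {n : ℕ} (φ : Vec n → ℝ) : Prop :=
  ∃ (C : ℝ) (γ : ℕ), ∀ x, |φ x| ≤ C * (1 + eucNorm x ^ γ)

/-- The switching obstacle `max_{j ≠ i} (v^j(x) - g_{ij}(x))`. -/
def obstacle {k m : ℕ} (g : Fin m → Fin m → Vec k → ℝ) (v : Fin m → Vec k → ℝ)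
    (i : Fin m) (x : Vec k) : ℝ :=
  ⨆ j : {j : Fin m // j ≠ i}, (v j x - g i j x)

/-- The second order term of the system, evaluated on a jet `(q, X)`. -/
def ham {k d m : ℕ} (r : ℝ) (b : Vec k → Vec k) (σ : Vec k → Matrix (Fin k) (Fin d) ℝ)
    (f : Fin m → Vec k → (Fin m → ℝ) → Vec d → ℝ) (v : Fin m → Vec k → ℝ)
    (i : Fin m) (x q : Vec k) (X : Matrix (Fin k) (Fin k) ℝ) : ℝ :=
  r * v i x - dotp (b x) q - (1/2) * Matrix.trace (σ x * (σ x)ᵀ * X)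
    - f i x (fun j => v j x) ((σ x)ᵀ.mulVec q)

def IsSupersolution {k d m : ℕ} (r : ℝ) (b : Vec k → Vec k)
    (σ : Vec k → Matrix (Fin k) (Fin d) ℝ)
    (f : Fin m → Vec k → (Fin m → ℝ) → Vec d → ℝ)
    (g : Fin m → Fin m → Vec k → ℝ) (v : Fin m → Vec k → ℝ) : Prop :=
  ∀ (i : Fin m) (x q : Vec k) (X : Matrix (Fin k) (Fin k) ℝ), InSubjet (v i) x q X →
    0 ≤ min (v i x - obstacle g v i x) (ham r b σ f v i x q X)

def IsSubsolution {k d m : ℕ} (r : ℝ) (b : Vec k → Vec k)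
    (σ : Vec k → Matrix (Fin k) (Fin d) ℝ)
    (f : Fin m → Vec k → (Fin m → ℝ) → Vec d → ℝ)
    (g : Fin m → Fin m → Vec k → ℝ) (v : Fin m → Vec k → ℝ) : Prop :=
  ∀ (i : Fin m) (x q : Vec k) (X : Matrix (Fin k) (Fin k) ℝ), InSuperjet (v i) x q X →
    min (v i x - obstacle g v i x) (ham r b σ f v i x q X) ≤ 0

/-- Gradient with respect to the standard basis. -/
def grad {k : ℕ} (φ : Vec k → ℝ) (x : Vec k) : Vec k :=
  fun i => fderiv ℝ φ x (Pi.single i 1)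

/-- Hessian matrix with respect to the standard basis. -/
def hess {k : ℕ} (φ : Vec k → ℝ) (x : Vec k) : Matrix (Fin k) (Fin k) ℝ :=
  fun i j => fderiv ℝ (fun y => fderiv ℝ φ y (Pi.single j 1)) x (Pi.single i 1)

/-- The infinitesimal generator `𝓛φ = ½ Tr[σσᵀ D²φ] + b · Dφ`. -/
def genL {k d : ℕ} (b : Vec k → Vec k) (σ : Vec k → Matrix (Fin k) (Fin d) ℝ)
    (φ : Vec k → ℝ) (x : Vec k) : ℝ :=
  (1/2) * Matrix.trace (σ x * (σ x)ᵀ * hess φ x) + dotp (b x) (grad φ x)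

/-- The structural assumptions on the data `b, σ, f, g` that do not involve second
derivatives of the switching costs: Lipschitz continuity and linear growth of the
coefficients, continuity, uniform Lipschitz continuity in `(y,z)` with constant `C`,
polynomial growth and monotonicity of the generators, and nonnegativity, continuity
and polynomial growth of the switching costs. -/
def CoreAssumptions {k d m : ℕ} (b : Vec k → Vec k)
    (σ : Vec k → Matrix (Fin k) (Fin d) ℝ)
    (f : Fin m → Vec k → (Fin m → ℝ) → Vec d → ℝ)
    (g : Fin m → Fin m → Vec k → ℝ) (C : ℝ) : Prop :=
  (∃ Cb : ℝ, ∀ x y : Vec k, eucNorm (b x - b y) ≤ Cb * eucNorm (x - y) ∧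
      Real.sqrt (frobSq (σ x - σ y)) ≤ Cb * eucNorm (x - y)) ∧
  (∃ Cb : ℝ, ∀ x : Vec k, eucNorm (b x) ≤ Cb * (1 + eucNorm x) ∧
      Real.sqrt (frobSq (σ x)) ≤ Cb * (1 + eucNorm x)) ∧
  (∀ i, Continuous fun p : Vec k × (Fin m → ℝ) × Vec d => f i p.1 p.2.1 p.2.2) ∧
  (∀ i (x : Vec k) (y y' : Fin m → ℝ) (z z' : Vec d),
      |f i x y z - f i x y' z'| ≤ C * (eucNorm (y - y') + eucNorm (z - z'))) ∧
  (∀ i, PolyGrowth fun x => f i x 0 0) ∧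
  (∀ i j, j ≠ i → ∀ (x : Vec k) (z : Vec d) (y : Fin m → ℝ) (t t' : ℝ), t ≤ t' →
      f i x (Function.update y j t) z ≤ f i x (Function.update y j t') z) ∧
  (∀ i j x, 0 ≤ g i j x) ∧
  (∀ i x, g i i x = 0) ∧
  (∀ i j, Continuous (g i j)) ∧
  (∀ i j, PolyGrowth (g i j))

/-- The non-free-loop condition on the switching costs. -/
def NonFreeLoop {k m : ℕ} (g : Fin m → Fin m → Vec k → ℝ) : Prop :=
  ∀ (N : ℕ) (ι : ℕ → Fin m), 2 ≤ N → ι 0 ≠ ι 1 → ι 0 = ι (N - 1) →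
    (Finset.image ι (Finset.range N)).card = N - 1 →
    ∀ x : Vec k, 0 < ∑ l ∈ Finset.range (N - 1), g (ι l) (ι (l + 1)) x

/-- The full standing assumptions: the core assumptions, smoothness of the switching
costs with `𝓛 g_{ij} ≤ 0`, and the non-free-loop condition. -/
def DataAssumptions {k d m : ℕ} (b : Vec k → Vec k)
    (σ : Vec k → Matrix (Fin k) (Fin d) ℝ)
    (f : Fin m → Vec k → (Fin m → ℝ) → Vec d → ℝ)
    (g : Fin m → Fin m → Vec k → ℝ) (C : ℝ) : Prop :=
  CoreAssumptions b σ f g C ∧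
  (∀ i j, ContDiff ℝ 2 (g i j)) ∧
  (∀ i j x, genL b σ (g i j) x ≤ 0) ∧
  NonFreeLoop g

lemma eucNorm_sq {n : ℕ} (v : Vec n) : eucNorm v ^ 2 = ∑ i, v i ^ 2 := by
  rw [eucNorm, Real.sq_sqrt]; positivity

lemma eucNorm_nonneg {n : ℕ} (v : Vec n) : 0 ≤ eucNorm v := Real.sqrt_nonneg _

lemma abs_le_eucNorm {n : ℕ} (v : Vec n) (i : Fin n) : |v i| ≤ eucNorm v := by
  rw [eucNorm, ← Real.sqrt_sq_eq_abs]
  exact Real.sqrt_le_sqrt (Finset.single_le_sum (f := fun j => v j ^ 2)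
    (fun j _ => sq_nonneg _) (Finset.mem_univ i))

lemma dist_le_eucNorm {n : ℕ} (x y : Vec n) : dist x y ≤ eucNorm (x - y) := by
  refine dist_pi_le_iff (eucNorm_nonneg _) |>.2 fun i => ?_
  rw [Real.dist_eq]
  simpa using abs_le_eucNorm (x - y) i

lemma eucNorm_le_dist {n : ℕ} (x y : Vec n) :
    eucNorm (x - y) ≤ Real.sqrt n * dist x y := by
  rw [eucNorm]
  have h1 : ∑ i, (x - y) i ^ 2 ≤ (n : ℝ) * dist x y ^ 2 := by
    calc ∑ i, (x - y) i ^ 2 ≤ ∑ _i : Fin n, dist x y ^ 2 := by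
          refine Finset.sum_le_sum fun i _ => ?_
          have h := dist_le_pi_dist x y i
          have : |(x - y) i| ≤ dist x y := by rwa [Pi.sub_apply, ← Real.dist_eq]
          calc (x - y) i ^ 2 = |(x - y) i| ^ 2 := (sq_abs _).symm
            _ ≤ dist x y ^ 2 := by
              exact pow_le_pow_left₀ (abs_nonneg _) this 2
      _ = (n : ℝ) * dist x y ^ 2 := by simp [mul_comm]
  calc Real.sqrt (∑ i, (x - y) i ^ 2) ≤ Real.sqrt ((n : ℝ) * dist x y ^ 2) :=
        Real.sqrt_le_sqrt h1
    _ = Real.sqrt n * dist x y := by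
        rw [Real.sqrt_mul (by positivity), Real.sqrt_sq dist_nonneg]

lemma cont_of_lipR {n : ℕ} (F : Vec n → ℝ) (L : ℝ)
    (h : ∀ x y, |F x - F y| ≤ L * eucNorm (x - y)) : Continuous F := by
  have h' : ∀ x y : Vec n, dist (F x) (F y) ≤ (max L 0 * Real.sqrt n) * dist x y := by
    intro x y
    rw [Real.dist_eq]
    calc |F x - F y| ≤ L * eucNorm (x - y) := h x y
      _ ≤ max L 0 * eucNorm (x - y) :=
          mul_le_mul_of_nonneg_right (le_max_left _ _) (eucNorm_nonneg _)
      _ ≤ max L 0 * (Real.sqrt n * dist x y) :=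
          mul_le_mul_of_nonneg_left (eucNorm_le_dist x y) (le_max_right _ _)
      _ = (max L 0 * Real.sqrt n) * dist x y := by ring
  exact (LipschitzWith.of_dist_le_mul (K := (max L 0 * Real.sqrt n).toNNReal)
    (fun x y => le_trans (h' x y) (by
      rw [Real.coe_toNNReal _ (by positivity)]))).continuous

lemma abs_entry_le_frob {n p : ℕ} (A : Matrix (Fin n) (Fin p) ℝ) (a : Fin n) (c : Fin p) :
    |A a c| ≤ Real.sqrt (frobSq A) := by
  rw [frobSq, ← Real.sqrt_sq_eq_abs]
  refine Real.sqrt_le_sqrt ?_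
  calc A a c ^ 2 ≤ ∑ j, A a j ^ 2 :=
        Finset.single_le_sum (f := fun j => A a j ^ 2) (fun j _ => sq_nonneg _) (Finset.mem_univ c)
    _ ≤ ∑ i, ∑ j, A i j ^ 2 :=
        Finset.single_le_sum (f := fun i => ∑ j, A i j ^ 2)
          (fun i _ => Finset.sum_nonneg fun j _ => sq_nonneg _) (Finset.mem_univ a)

lemma quadForm_add {n : ℕ} {X : Matrix (Fin n) (Fin n) ℝ} (hX : X.IsSymm) (a c : Vec n) :
    quadForm X (a + c) = quadForm X a + 2 * dotp (X.mulVec a) c + quadForm X c := by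
  have hsym : ∀ i j, X i j = X j i := fun i j => hX.apply j i
  simp only [quadForm, dotp, Matrix.mulVec, dotProduct, Pi.add_apply]
  have expand : ∀ i j, X i j * (a i + c i) * (a j + c j)
      = X i j * a i * a j + X i j * a i * c j + X i j * c i * a j + X i j * c i * c j := by
    intros; ring
  simp_rw [expand, Finset.sum_add_distrib]
  have h1 : ∑ i, ∑ j, X i j * a i * c j = ∑ i, ∑ j, X i j * c i * a j := by
    rw [Finset.sum_comm]
    refine Finset.sum_congr rfl fun i _ => Finset.sum_congr rfl fun j _ => ?_
    rw [hsym j i]; ring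
  have h2 : ∑ i, (∑ j, X i j * a j) * c i = ∑ i, ∑ j, X i j * c i * a j := by
    refine Finset.sum_congr rfl fun i _ => ?_
    rw [Finset.sum_mul]
    exact Finset.sum_congr rfl fun j _ => by ring
  rw [h1, h2]; ring

lemma quadForm_sub_smul_one {n : ℕ} (X : Matrix (Fin n) (Fin n) ℝ) (c : ℝ) (h : Vec n) :
    quadForm (X - c • 1) h = quadForm X h - c * ∑ i, h i ^ 2 := by
  simp only [quadForm, Matrix.sub_apply, Matrix.smul_apply, Matrix.one_apply, smul_eq_mul]
  have : ∀ i j, (X i j - c * (if i = j then (1:ℝ) else 0)) * h i * h j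
      = X i j * h i * h j - (if i = j then c * (h i * h j) else 0) := by
    intro i j; by_cases hij : i = j <;> simp [hij] <;> ring
  simp_rw [this, Finset.sum_sub_distrib, Finset.sum_ite_eq, Finset.mem_univ, if_true,
    Finset.mul_sum]
  congr 1
  exact Finset.sum_congr rfl fun i _ => by ring
lemma dotp_add3 {n : ℕ} (a c e h' : Vec n) :
    dotp (fun l => a l + c l - e l) h' = dotp a h' + dotp c h' - dotp e h' := by
  simp only [dotp, ← Finset.sum_add_distrib, ← Finset.sum_sub_distrib]
  exact Finset.sum_congr rfl fun i _ => by ring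

lemma dotp_smul_left {n : ℕ} (c : ℝ) (a h' : Vec n) :
    dotp (fun l => c * a l) h' = c * dotp a h' := by
  simp only [dotp, Finset.mul_sum]
  exact Finset.sum_congr rfl fun i _ => by ring

lemma sumsq_add {n : ℕ} (a c : Vec n) :
    ∑ l, (a + c) l ^ 2 = ∑ l, a l ^ 2 + 2 * dotp a c + ∑ l, c l ^ 2 := by
  simp only [dotp, Pi.add_apply, Finset.mul_sum, ← Finset.sum_add_distrib]
  exact Finset.sum_congr rfl fun i _ => by ring

/-- Exact second-order Taylor shift for the quadratic test function. -/
lemma jet_shift {n : ℕ} {X : Matrix (Fin n) (Fin n) ℝ} (hX : X.IsSymm)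
    (q h h' : Vec n) (ε : ℝ) :
    dotp q (h + h') + (1/2) * quadForm X (h + h') - 2*ε * ∑ l, (h + h') l ^ 2
    = (dotp q h + (1/2) * quadForm X h - 2*ε * ∑ l, h l ^ 2)
      + dotp (fun l => q l + X.mulVec h l - 4*ε*h l) h'
      + (1/2) * quadForm (X - (4*ε) • 1) h' := by
  have hd : dotp q (h + h') = dotp q h + dotp q h' := by
    simp only [dotp, Pi.add_apply, ← Finset.sum_add_distrib]
    exact Finset.sum_congr rfl fun i _ => by ring
  rw [hd, quadForm_add hX, sumsq_add, dotp_add3 q (X.mulVec h) (fun l => 4*ε*h l) h',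
    dotp_smul_left (4*ε) h h', quadForm_sub_smul_one]
  have : dotp h h' = dotp h' h := by
    simp only [dotp]; exact Finset.sum_congr rfl fun i _ => by ring
  rw [this]; ring

/-- Monotonicity of `f i` in all off-diagonal coordinates simultaneously. -/
lemma f_mono_aux {k d m : ℕ} (f : Fin m → Vec k → (Fin m → ℝ) → Vec d → ℝ)
    (hf : ∀ i j, j ≠ i → ∀ (x : Vec k) (z : Vec d) (y : Fin m → ℝ) (t t' : ℝ), t ≤ t' →
      f i x (Function.update y j t) z ≤ f i x (Function.update y j t') z)
    (i : Fin m) (x : Vec k) (z : Vec d) (y y' : Fin m → ℝ)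
    (hi : y i = y' i) (h : ∀ j, y j ≤ y' j) :
    f i x y z ≤ f i x y' z := by
  have key : ∀ s : Finset (Fin m), i ∉ s →
      f i x y z ≤ f i x (fun j => if j ∈ s then y' j else y j) z := by
    intro s
    induction s using Finset.induction_on with
    | empty => intro _; simp
    | @insert a s ha ih =>
      intro hins
      have hia : a ≠ i := fun hai => hins (by simp [hai])
      have his : i ∉ s := fun hs => hins (Finset.mem_insert_of_mem hs)
      set F : Fin m → ℝ := fun j => if j ∈ s then y' j else y j with hF
      have step : f i x F z ≤ f i x (Function.update F a (y' a)) z := by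
        have hFa : F a = y a := by simp [hF, ha]
        calc f i x F z = f i x (Function.update F a (F a)) z := by
              rw [Function.update_eq_self]
          _ ≤ f i x (Function.update F a (y' a)) z := by
              rw [hFa]; exact hf i a hia x z F (y a) (y' a) (h a)
      have heq : Function.update F a (y' a) = fun j => if j ∈ insert a s then y' j else y j := by
        funext j
        by_cases hj : j = a
        · subst hj; simp [Function.update, hF]
        · simp [Function.update, hj, hF, Finset.mem_insert, hj]
      exact le_trans (ih his) (heq ▸ step)
  have := key (Finset.univ.erase i) (by simp)
  have heq : (fun j => if j ∈ Finset.univ.erase i then y' j else y j) = y' := by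
    funext j
    by_cases hj : j = i
    · subst hj; simp [hi]
    · simp [Finset.mem_erase, hj]
  rwa [heq] at this
section ContHelp
variable {α : Type*} [TopologicalSpace α]

lemma continuous_dotp_comp {n : ℕ} {u w : α → Vec n}
    (hu : ∀ i, Continuous fun a => u a i) (hw : ∀ i, Continuous fun a => w a i) :
    Continuous fun a => dotp (u a) (w a) := by
  unfold dotp
  exact continuous_finset_sum _ fun i _ => (hu i).mul (hw i)

lemma continuous_quadForm_comp {n : ℕ} (X : Matrix (Fin n) (Fin n) ℝ) {w : α → Vec n}
    (hw : ∀ i, Continuous fun a => w a i) :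
    Continuous fun a => quadForm X (w a) := by
  unfold quadForm
  exact continuous_finset_sum _ fun i _ => continuous_finset_sum _ fun j _ =>
    (continuous_const.mul (hw i)).mul (hw j)

lemma continuous_sumsq_comp {n : ℕ} {w : α → Vec n}
    (hw : ∀ i, Continuous fun a => w a i) :
    Continuous fun a => ∑ l, (w a) l ^ 2 :=
  continuous_finset_sum _ fun i _ => (hw i).pow 2

end ContHelp

example {n : ℕ} (x : Vec n) (r : ℝ) : IsCompact (Metric.closedBall x r) :=
  isCompact_closedBall x r

example {n : ℕ} (s : Set (Vec n)) (hs : IsCompact s) (hne : s.Nonempty) (f : Vec n → ℝ)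
    (hf : Continuous f) : ∃ y ∈ s, IsMinOn f s y :=
  hs.exists_isMinOn hne hf.continuousOn
/-- **Stability of supersolutions under monotone increasing limits.**
If for every `n ≥ 1` the tuple `(v^{1,n},…,v^{m,n})` of continuous functions, increasing
in `n` and uniformly of polynomial growth, is a viscosity supersolution of the decoupled
system `(S_n)` (generator frozen at level `n-1` off the diagonal), then the pointwise
increasing limit `(v^1,…,v^m)` is lower semicontinuous and is a viscosity supersolution
of the fully coupled system `(S)`. -/
theorem statement9 {k d m : ℕ} (hk : 1 ≤ k) (hd : 1 ≤ d) (hm : 2 ≤ m)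
    (r : ℝ) (hr : 0 < r)
    (b : Vec k → Vec k) (σ : Vec k → Matrix (Fin k) (Fin d) ℝ)
    (f : Fin m → Vec k → (Fin m → ℝ) → Vec d → ℝ)
    (g : Fin m → Fin m → Vec k → ℝ) (C : ℝ) (hC : 0 ≤ C)
    (hcore : CoreAssumptions b σ f g C)
    (vseq : ℕ → Fin m → Vec k → ℝ) (Cv : ℝ) (γ : ℕ)
    (hcont : ∀ n i, Continuous (vseq n i))
    (hmono : ∀ n i x, vseq n i x ≤ vseq (n + 1) i x)
    (hbdd : ∀ n i x, |vseq n i x| ≤ Cv * (1 + eucNorm x ^ γ))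
    (hsupn : ∀ n : ℕ, 1 ≤ n →
      ∀ (i : Fin m) (x q : Vec k) (X : Matrix (Fin k) (Fin k) ℝ),
        InSubjet (vseq n i) x q X →
        0 ≤ min (vseq n i x - obstacle g (vseq n) i x)
          (r * vseq n i x - dotp (b x) q - (1/2) * Matrix.trace (σ x * (σ x)ᵀ * X)
            - f i x (Function.update (fun l => vseq (n - 1) l x) i (vseq n i x))
                ((σ x)ᵀ.mulVec q)))
    (v : Fin m → Vec k → ℝ)
    (hlim : ∀ i x, Tendsto (fun n => vseq n i x) atTop (nhds (v i x))) :
    (∀ i, LowerSemicontinuous (v i)) ∧ IsSupersolution r b σ f g v := by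
  classical
  have hmono' : ∀ {p n : ℕ}, p ≤ n → ∀ i x, vseq p i x ≤ vseq n i x := by
    intro p n hpn i x
    exact monotone_nat_of_le_succ (fun n => hmono n i x) hpn
  have hle : ∀ p i x, vseq p i x ≤ v i x := fun p i x =>
    ge_of_tendsto (hlim i x) (eventually_atTop.2 ⟨p, fun n hn => hmono' hn i x⟩)
  have hlsc : ∀ i, LowerSemicontinuous (v i) := by
    intro i x y hy
    obtain ⟨n, hn⟩ := ((hlim i x).eventually (eventually_gt_nhds hy)).exists
    filter_upwards [((hcont n i).tendsto x).eventually (eventually_gt_nhds hn)] with z hz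
    exact lt_of_lt_of_le hz (hle n i z)
  obtain ⟨Cb, hCb⟩ := hcore.1
  have hbc : ∀ a, Continuous fun x => b x a := fun a =>
    cont_of_lipR _ Cb fun x y =>
      le_trans (by simpa using abs_le_eucNorm (b x - b y) a) (hCb x y).1
  have hσc : ∀ a c, Continuous fun x => σ x a c := fun a c =>
    cont_of_lipR _ Cb fun x y =>
      le_trans (by simpa using abs_entry_le_frob (σ x - σ y) a c) (hCb x y).2
  have hfc := hcore.2.2.1
  have hfmono := hcore.2.2.2.2.2.1
  have hgc := hcore.2.2.2.2.2.2.2.2.1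
  refine ⟨hlsc, ?_⟩
  intro i x₀ q X hjet
  obtain ⟨hXs, hsub⟩ := hjet
  have hnei : Nonempty {j : Fin m // j ≠ i} := by
    obtain ⟨j, hj⟩ := Fintype.exists_ne_of_one_lt_card (by simp; omega) i
    exact ⟨⟨j, hj⟩⟩
  have key : ∀ ε : ℝ, 0 < ε → (obstacle g v i x₀ ≤ v i x₀) ∧
      f i x₀ (fun j => v j x₀) ((σ x₀)ᵀ.mulVec q) ≤
        r * v i x₀ - dotp (b x₀) q - (1/2) * Matrix.trace (σ x₀ * (σ x₀)ᵀ * X)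
          + 2*ε * Matrix.trace (σ x₀ * (σ x₀)ᵀ) := by
    intro ε hε
    obtain ⟨δ0, hδ0, hball⟩ := Metric.eventually_nhds_iff.1 (hsub ε hε)
    set δ := δ0/2 with hδdef
    have hδ : 0 < δ := by positivity
    set B := Metric.closedBall x₀ δ with hB
    set φ : Vec k → ℝ := fun y => v i x₀ + dotp q (y - x₀) + (1/2) * quadForm X (y - x₀)
      - 2*ε * ∑ l, (y - x₀) l ^ 2 with hφ
    have hyc : ∀ l : Fin k, Continuous fun y : Vec k => (y - x₀) l := fun l => by
      exact (continuous_apply l).sub (continuous_const : Continuous fun _ : Vec k => x₀ l)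
    have hφc : Continuous φ := by
      rw [hφ]
      exact (((continuous_const.add (continuous_dotp_comp (u := fun _ => q) (w := fun y => y - x₀)
        (fun _ => continuous_const) hyc)).add
        (continuous_const.mul (continuous_quadForm_comp X hyc))).sub
        (continuous_const.mul (continuous_sumsq_comp hyc)))
    have hφx₀ : φ x₀ = v i x₀ := by simp [hφ, dotp, quadForm]
    have hwge : ∀ y ∈ B, φ y + ε * ∑ l, (y - x₀) l ^ 2 ≤ v i y := by
      intro y hy
      have hd : dist y x₀ < δ0 := lt_of_le_of_lt (Metric.mem_closedBall.1 hy) (by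
        rw [hδdef]; linarith)
      have h1 := hball hd
      rw [eucNorm_sq] at h1
      simp only [hφ]
      linarith
    have hBc : IsCompact B := isCompact_closedBall _ _
    have hBne : B.Nonempty := ⟨x₀, Metric.mem_closedBall_self hδ.le⟩
    have hminex : ∀ n, ∃ y ∈ B, IsMinOn (fun z => vseq n i z - φ z) B y := fun n =>
      hBc.exists_isMinOn hBne ((hcont n i).sub hφc).continuousOn
    choose xs hxsB hxs using hminex
    have hxs' : ∀ n, ∀ z ∈ B, vseq n i (xs n) - φ (xs n) ≤ vseq n i z - φ z := fun n =>
      isMinOn_iff.1 (hxs n)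
    have hx₀B : x₀ ∈ B := Metric.mem_closedBall_self hδ.le
    have hw0 : ∀ n, vseq n i x₀ - φ x₀ ≤ 0 := fun n => by
      rw [hφx₀]; linarith [hle n i x₀]
    have hwmin0 : ∀ n, vseq n i (xs n) - φ (xs n) ≤ 0 := fun n =>
      le_trans (hxs' n x₀ hx₀B) (hw0 n)
    -- convergence of minimizers to x₀
    have hxconv : Tendsto xs atTop (nhds x₀) := by
      rw [Metric.tendsto_atTop]
      intro ρ hρ
      set ρ' := min ρ δ with hρ'def
      have hρ' : 0 < ρ' := lt_min hρ hδ
      set A := B ∩ (Metric.ball x₀ ρ')ᶜ with hA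
      have hAc : IsCompact A := hBc.inter_right Metric.isOpen_ball.isClosed_compl
      have hAlb : ∀ y ∈ A, ε * ρ' ^ 2 ≤ v i y - φ y := by
        intro y hy
        have h1 := hwge y hy.1
        have h2 : ρ' ≤ dist y x₀ := le_of_not_gt fun hc => hy.2 (Metric.mem_ball.2 hc)
        have h3 : dist y x₀ ≤ eucNorm (y - x₀) := dist_le_eucNorm y x₀
        have h4 : ρ' ^ 2 ≤ ∑ l, (y - x₀) l ^ 2 := by
          rw [← eucNorm_sq]
          exact pow_le_pow_left₀ hρ'.le (h2.trans h3) 2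
        nlinarith [hε]
      have hUopen : ∀ n : ℕ, IsOpen {y : Vec k | (0:ℝ) < vseq n i y - φ y} := fun n =>
        isOpen_lt continuous_const ((hcont n i).sub hφc)
      have hcover : A ⊆ ⋃ n : ℕ, {y : Vec k | (0:ℝ) < vseq n i y - φ y} := by
        intro y hy
        have hv : (0:ℝ) < v i y - φ y := lt_of_lt_of_le (by positivity) (hAlb y hy)
        obtain ⟨n, hn⟩ := (((hlim i y).sub_const (φ y)).eventually (eventually_gt_nhds hv)).exists
        exact Set.mem_iUnion.2 ⟨n, hn⟩
      obtain ⟨t, ht⟩ := hAc.elim_finite_subcover _ hUopen hcover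
      set N := t.sup id with hN
      have hAN : ∀ y ∈ A, (0:ℝ) < vseq N i y - φ y := by
        intro y hy
        obtain ⟨n, hnt, hn⟩ := Set.mem_iUnion₂.1 (ht hy)
        have hnN : n ≤ N := Finset.le_sup (f := id) hnt
        have := hmono' hnN i y
        simp only [Set.mem_setOf_eq] at hn
        linarith
      refine ⟨N, fun n hn => ?_⟩
      have hnotA : xs n ∉ A := by
        intro hmem
        have h1 := hAN (xs n) hmem
        have h2 := hmono' hn i (xs n)
        linarith [hwmin0 n]
      have : xs n ∈ Metric.ball x₀ ρ' := by
        by_contra hc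
        exact hnotA ⟨hxsB n, hc⟩
      exact lt_of_lt_of_le (Metric.mem_ball.1 this) (min_le_left _ _)
    -- the minimum values tend to 0
    have hwn0 : Tendsto (fun n => vseq n i (xs n) - φ (xs n)) atTop (nhds 0) := by
      rw [Metric.tendsto_atTop]
      intro η hη
      obtain ⟨p, hp⟩ : ∃ p, v i x₀ - vseq p i x₀ < η/2 := by
        obtain ⟨p, hp⟩ := (Metric.tendsto_atTop.1 (hlim i x₀) (η/2) (by positivity))
        refine ⟨p, ?_⟩
        have := hp p le_rfl
        rw [Real.dist_eq, abs_lt] at this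
        linarith [this.1]
      have hcp : Tendsto (fun n => vseq p i (xs n) - φ (xs n)) atTop
          (nhds (vseq p i x₀ - φ x₀)) :=
        (((hcont p i).sub hφc).tendsto x₀).comp hxconv
      have hev : ∀ᶠ n in atTop, -η < vseq p i (xs n) - φ (xs n) :=
        hcp.eventually (eventually_gt_nhds (by rw [hφx₀]; linarith))
      obtain ⟨N₂, hN₂⟩ := eventually_atTop.1 hev
      refine ⟨max p N₂, fun n hn => ?_⟩
      have h1 := hN₂ n (le_trans (le_max_right _ _) hn)
      have h2 := hmono' (le_trans (le_max_left p N₂) hn) i (xs n)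
      have h3 := hwmin0 n
      rw [Real.dist_eq, sub_zero, abs_lt]
      constructor <;> linarith
    have hφconv : Tendsto (fun n => φ (xs n)) atTop (nhds (v i x₀)) := by
      have := (hφc.tendsto x₀).comp hxconv
      rwa [hφx₀] at this
    have hvconv : Tendsto (fun n => vseq n i (xs n)) atTop (nhds (v i x₀)) := by
      have := hwn0.add hφconv
      simpa using this
    have hball' : ∀ᶠ n in atTop, xs n ∈ Metric.ball x₀ δ :=
      hxconv (Metric.ball_mem_nhds x₀ hδ)
    -- the shifted jet
    set qt : Vec k → Vec k := fun x l => q l + (∑ j, X l j * (x j - x₀ j)) - 4*ε*(x l - x₀ l)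
      with hqt
    have hqtc : ∀ l, Continuous fun x => qt x l := by
      intro l
      simp only [hqt]
      exact ((continuous_const.add (continuous_finset_sum _ fun j _ =>
        continuous_const.mul ((continuous_apply j).sub continuous_const))).sub
        (continuous_const.mul ((continuous_apply l).sub continuous_const)))
    have hqt0 : qt x₀ = q := by funext l; simp [hqt]
    have hqteq : ∀ x : Vec k, qt x = fun l => q l + X.mulVec (x - x₀) l - 4*ε*(x - x₀) l := by
      intro x; funext l
      simp [hqt, Matrix.mulVec, dotProduct]
    set X' : Matrix (Fin k) (Fin k) ℝ := X - (4*ε) • 1 with hX'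
    have hX's : X'.IsSymm := by
      rw [Matrix.IsSymm, hX', Matrix.transpose_sub, Matrix.transpose_smul,
        Matrix.transpose_one, hXs]
    have hjetn : ∀ n, xs n ∈ Metric.ball x₀ δ → InSubjet (vseq n i) (xs n) (qt (xs n)) X' := by
      intro n hxn
      refine ⟨hX's, fun ε' hε' => ?_⟩
      refine Filter.eventually_of_mem (Metric.isOpen_ball.mem_nhds hxn) fun y hy => ?_
      have hyB : y ∈ B := Metric.ball_subset_closedBall hy
      have hhh : y - x₀ = (xs n - x₀) + (y - xs n) := by abel
      have hid : φ y = φ (xs n) + dotp (qt (xs n)) (y - xs n)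
          + (1/2) * quadForm X' (y - xs n) := by
        simp only [hφ]
        rw [hhh, hqteq (xs n), hX']
        linarith [jet_shift hXs q (xs n - x₀) (y - xs n) ε]
      have hmin := hxs' n y hyB
      have hnn : 0 ≤ ε' * eucNorm (y - xs n) ^ 2 :=
        mul_nonneg hε'.le (pow_nonneg (eucNorm_nonneg _) 2)
      clear_value X' qt φ B δ
      linarith
    -- supersolution inequalities along the sequence
    have hsap : ∀ᶠ n in atTop,
        (0 ≤ vseq n i (xs n) - obstacle g (vseq n) i (xs n)) ∧
        f i (xs n) (Function.update (fun l => vseq (n-1) l (xs n)) i (vseq n i (xs n)))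
            ((σ (xs n))ᵀ.mulVec (qt (xs n)))
          ≤ r * vseq n i (xs n) - dotp (b (xs n)) (qt (xs n))
            - (1/2) * Matrix.trace (σ (xs n) * (σ (xs n))ᵀ * X') := by
      filter_upwards [hball', eventually_ge_atTop 1] with n hb h1
      have h := hsupn n h1 i (xs n) (qt (xs n)) X' (hjetn n hb)
      rw [le_min_iff] at h
      exact ⟨h.1, by linarith [h.2]⟩
    -- obstacle inequality in the limit
    have hobs1 : ∀ j : Fin m, j ≠ i → v j x₀ - g i j x₀ ≤ v i x₀ := by
      intro j hj
      have hstep : ∀ p : ℕ, vseq p j x₀ - g i j x₀ ≤ v i x₀ := by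
        intro p
        have hev : ∀ᶠ n in atTop, vseq p j (xs n) - g i j (xs n) ≤ vseq n i (xs n) := by
          filter_upwards [hsap, eventually_ge_atTop p] with n hn hpn
          have hbdd' : BddAbove (Set.range fun j : {j : Fin m // j ≠ i} =>
              vseq n (↑j) (xs n) - g i (↑j) (xs n)) :=
            Set.Finite.bddAbove (Set.finite_range _)
          have h1 : vseq n j (xs n) - g i j (xs n) ≤ obstacle g (vseq n) i (xs n) :=
            le_ciSup hbdd' ⟨j, hj⟩
          have h2 := hmono' hpn j (xs n)
          linarith [hn.1]
        have hL : Tendsto (fun n => vseq p j (xs n) - g i j (xs n)) atTop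
            (nhds (vseq p j x₀ - g i j x₀)) :=
          (((hcont p j).sub (hgc i j)).tendsto x₀).comp hxconv
        exact le_of_tendsto_of_tendsto hL hvconv
          (hev : (fun n => vseq p j (xs n) - g i j (xs n)) ≤ᶠ[atTop]
            fun n => vseq n i (xs n))
      have := ((hlim j x₀).sub_const (g i j x₀))
      exact le_of_tendsto this (Filter.Eventually.of_forall hstep)
    have hobs : obstacle g v i x₀ ≤ v i x₀ := ciSup_le fun j => hobs1 j j.2
    -- Hamiltonian inequality in the limit
    set Zf : Vec k → Vec d := fun x => (σ x)ᵀ.mulVec (qt x) with hZf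
    have hZc : ∀ a, Continuous fun x => Zf x a := by
      intro a
      simp only [hZf, Matrix.mulVec, dotProduct, Matrix.transpose_apply]
      exact continuous_finset_sum _ fun l _ => (hσc l a).mul (hqtc l)
    have hZ0 : Zf x₀ = (σ x₀)ᵀ.mulVec q := by simp only [hZf]; rw [hqt0]
    set Df : Vec k → ℝ := fun x => dotp (b x) (qt x) with hDf
    have hDc : Continuous Df := continuous_dotp_comp hbc hqtc
    set Tf : Vec k → ℝ := fun x => Matrix.trace (σ x * (σ x)ᵀ * X') with hTf
    have hTc : Continuous Tf := by
      simp only [hTf, Matrix.trace, Matrix.diag, Matrix.mul_apply, Matrix.transpose_apply]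
      exact continuous_finset_sum _ fun a _ => continuous_finset_sum _ fun l _ =>
        (continuous_finset_sum _ fun j _ => (hσc a j).mul (hσc l j)).mul continuous_const
    have hRconv : Tendsto (fun n => r * vseq n i (xs n) - Df (xs n) - (1/2) * Tf (xs n))
        atTop (nhds (r * v i x₀ - Df x₀ - (1/2) * Tf x₀)) :=
      ((hvconv.const_mul r).sub ((hDc.tendsto x₀).comp hxconv)).sub
        (((hTc.tendsto x₀).comp hxconv).const_mul (1/2))
    have hfp : ∀ p : ℕ, f i x₀ (Function.update (fun l => vseq p l x₀) i (v i x₀)) (Zf x₀)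
        ≤ r * v i x₀ - Df x₀ - (1/2) * Tf x₀ := by
      intro p
      have hev : ∀ᶠ n in atTop,
          f i (xs n) (Function.update (fun l => vseq p l (xs n)) i (vseq n i (xs n))) (Zf (xs n))
            ≤ r * vseq n i (xs n) - Df (xs n) - (1/2) * Tf (xs n) := by
        filter_upwards [hsap, eventually_ge_atTop (p+1)] with n hn hpn
        refine le_trans ?_ hn.2
        apply f_mono_aux f hfmono
        · simp [Function.update_self]
        · intro j
          by_cases hji : j = i
          · subst hji; simp [Function.update_self]
          · simp only [Function.update_of_ne hji]
            exact hmono' (by omega : p ≤ n - 1) j (xs n)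
      have htrip : Tendsto (fun n => ((xs n : Vec k),
          ((Function.update (fun l => vseq p l (xs n)) i (vseq n i (xs n))) : Fin m → ℝ),
          (Zf (xs n) : Vec d))) atTop
          (nhds (x₀, Function.update (fun l => vseq p l x₀) i (v i x₀), Zf x₀)) := by
        refine hxconv.prodMk_nhds (Tendsto.prodMk_nhds ?_ ?_)
        · rw [tendsto_pi_nhds]
          intro l
          by_cases hli : l = i
          · subst hli; simpa [Function.update_self] using hvconv
          · simpa [Function.update_of_ne hli, Function.comp_def] using ((hcont p l).tendsto x₀).comp hxconv
        · rw [tendsto_pi_nhds]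
          intro a
          exact ((hZc a).tendsto x₀).comp hxconv
      have hLf := ((hfc i).tendsto _).comp htrip
      exact le_of_tendsto_of_tendsto hLf hRconv
        (hev : (fun n => f i (xs n)
            (Function.update (fun l => vseq p l (xs n)) i (vseq n i (xs n))) (Zf (xs n)))
          ≤ᶠ[atTop] fun n => r * vseq n i (xs n) - Df (xs n) - (1/2) * Tf (xs n))
    have hupd : Tendsto (fun p => ((Function.update (fun l => vseq p l x₀) i (v i x₀)) :
        Fin m → ℝ)) atTop (nhds (fun l => v l x₀)) := by
      rw [tendsto_pi_nhds]
      intro l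
      by_cases hli : l = i
      · subst hli; simpa [Function.update_self] using (tendsto_const_nhds :
          Tendsto (fun _ : ℕ => v l x₀) atTop (nhds (v l x₀)))
      · simpa [Function.update_of_ne hli] using hlim l x₀
    have hLf2 : Tendsto (fun p => f i x₀
        (Function.update (fun l => vseq p l x₀) i (v i x₀)) (Zf x₀)) atTop
        (nhds (f i x₀ (fun l => v l x₀) (Zf x₀))) :=
      ((hfc i).tendsto _).comp (tendsto_const_nhds.prodMk_nhds
        (hupd.prodMk_nhds tendsto_const_nhds))
    have hfinal : f i x₀ (fun l => v l x₀) (Zf x₀) ≤ r * v i x₀ - Df x₀ - (1/2) * Tf x₀ :=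
      le_of_tendsto hLf2 (Filter.Eventually.of_forall hfp)
    have htr : Tf x₀ = Matrix.trace (σ x₀ * (σ x₀)ᵀ * X)
        - 4*ε * Matrix.trace (σ x₀ * (σ x₀)ᵀ) := by
      simp only [hTf]
      rw [hX', Matrix.mul_sub, Matrix.mul_smul, Matrix.mul_one, Matrix.trace_sub,
        Matrix.trace_smul]
      simp [smul_eq_mul]
    have hDx₀ : Df x₀ = dotp (b x₀) q := by simp only [hDf]; rw [hqt0]
    refine ⟨hobs, ?_⟩
    rw [hZ0] at hfinal
    rw [htr, hDx₀] at hfinal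
    linarith
  -- conclude
  have hT0 : 0 ≤ Matrix.trace (σ x₀ * (σ x₀)ᵀ) := by
    simp only [Matrix.trace, Matrix.diag, Matrix.mul_apply, Matrix.transpose_apply]
    exact Finset.sum_nonneg fun a _ => Finset.sum_nonneg fun j _ => mul_self_nonneg _
  refine le_min ?_ ?_
  · linarith [(key 1 one_pos).1]
  · rw [ham]
    have hled : ∀ η : ℝ, 0 < η →
        f i x₀ (fun j => v j x₀) ((σ x₀)ᵀ.mulVec q)
          ≤ r * v i x₀ - dotp (b x₀) q - (1/2) * Matrix.trace (σ x₀ * (σ x₀)ᵀ * X) + η := by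
      intro η hη
      set T := Matrix.trace (σ x₀ * (σ x₀)ᵀ) with hTdef
      have hεpos : 0 < η / (2 * T + 2) := by positivity
      have h := (key (η / (2 * T + 2)) hεpos).2
      have hTle : 2 * (η / (2 * T + 2)) * T ≤ η := by
        have hc : (0:ℝ) < 2 * T + 2 := by positivity
        have heq : 2 * (η / (2 * T + 2)) * T = η * (2 * T) / (2 * T + 2) := by ring
        rw [heq, div_le_iff₀ hc]
        nlinarith
      linarith
    have := le_of_forall_pos_le_add hled
    linarith
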